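/- Let μ be a probability measure on F_q^d with support E, and suppose |E| ≤ c·q^d for some c ∈ (0,1). Then sup_{ξ ≠ 0} |μ̂(ξ)| ≥ sqrt(1−c) · |E|^{-1/2}. -/

import Mathlib

open Finset BigOperators Matrix

noncomputable def ft {F : Type*} [CommRing F] [Fintype F] {d : ℕ}
    (χ : AddChar F ℂ) (f : (Fin d → F) → ℂ) (ξ : Fin d → F) : ℂ :=
  ∑ x, χ (-(ξ ⬝ᵥ x)) * f x

lemma orth {F : Type*} [Field F] [Fintype F] [DecidableEq F] {d : ℕ}
    (χ : AddChar F ℂ) (hχ : χ ≠ 1) (v : Fin d → F) (hv : v ≠ 0) :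
    ∑ ξ : Fin d → F, χ (ξ ⬝ᵥ v) = 0 := by
  obtain ⟨t, ht⟩ := AddChar.ne_one_iff.1 hχ
  obtain ⟨i, hi⟩ := Function.ne_iff.1 hv
  set w : Fin d → F := Pi.single i (t * (v i)⁻¹) with hw
  have hwv : w ⬝ᵥ v = t := by
    rw [hw, single_dotProduct, mul_assoc, inv_mul_cancel₀ hi, mul_one]
  refine eq_zero_of_mul_eq_self_left ht ?_
  rw [Finset.mul_sum]
  refine Fintype.sum_equiv (Equiv.addLeft w) _ _ fun ξ ↦ ?_
  simp only [Equiv.coe_addLeft, add_dotProduct, AddChar.map_add_eq_mul, hwv]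

lemma plancherel {F : Type*} [Field F] [Fintype F] [DecidableEq F] {d : ℕ}
    (χ : AddChar F ℂ) (hχ : χ ≠ 1) (f : (Fin d → F) → ℂ) :
    ∑ ξ : Fin d → F, ft χ f ξ * (starRingEnd ℂ) (ft χ f ξ)
      = (Fintype.card F : ℂ) ^ d * ∑ x, f x * (starRingEnd ℂ) (f x) := by
  have key : ∀ ξ : Fin d → F, ft χ f ξ * (starRingEnd ℂ) (ft χ f ξ)
      = ∑ x, ∑ y, χ (ξ ⬝ᵥ (y - x)) * (f x * (starRingEnd ℂ) (f y)) := by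
    intro ξ
    rw [ft, map_sum, Finset.sum_mul_sum]
    refine Finset.sum_congr rfl fun x _ ↦ Finset.sum_congr rfl fun y _ ↦ ?_
    rw [RingHom.map_mul, dotProduct_sub]
    have h1 : (starRingEnd ℂ) (χ (-(ξ ⬝ᵥ y))) = χ (ξ ⬝ᵥ y) := by
      rw [← AddChar.map_neg_eq_conj, neg_neg]
    have h2 : χ (ξ ⬝ᵥ y - ξ ⬝ᵥ x) = χ (-(ξ ⬝ᵥ x)) * χ (ξ ⬝ᵥ y) := by
      rw [← AddChar.map_add_eq_mul]; ring_nf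
    rw [h1, h2]; ring
  simp_rw [key]
  rw [Finset.sum_comm]
  have : ∀ x : Fin d → F, ∑ ξ : Fin d → F, ∑ y, χ (ξ ⬝ᵥ (y - x)) * (f x * (starRingEnd ℂ) (f y))
      = (Fintype.card F : ℂ) ^ d * (f x * (starRingEnd ℂ) (f x)) := by
    intro x
    rw [Finset.sum_comm]
    have : ∀ y : Fin d → F, ∑ ξ : Fin d → F, χ (ξ ⬝ᵥ (y - x)) * (f x * (starRingEnd ℂ) (f y))
        = (if y = x then (Fintype.card F : ℂ) ^ d else 0) * (f x * (starRingEnd ℂ) (f y)) := by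
      intro y
      rw [← Finset.sum_mul]
      congr 1
      by_cases h : y = x
      · simp [h, AddChar.map_zero_eq_one, Finset.card_univ, Fintype.card_fun]
      · rw [orth χ hχ _ (sub_ne_zero.2 h), if_neg h]
    simp_rw [this, ite_mul, zero_mul]
    rw [Finset.sum_ite_eq' Finset.univ x]
    simp
  simp_rw [this]
  rw [← Finset.mul_sum]

/-- If `μ` is a probability measure on `F_q^d` with support `E` and `|E| ≤ c q^d` for some
`c ∈ (0,1)`, then `sup_{ξ ≠ 0} |μ̂(ξ)| ≥ sqrt(1−c) · |E|^{-1/2}`. -/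
theorem stmt_5 {F : Type*} [Field F] [Fintype F] [DecidableEq F] {d q : ℕ}
    (hq : Fintype.card F = q) (χ : AddChar F ℂ) (hχ : χ ≠ 1)
    (μ : (Fin d → F) → ℝ) (hμ0 : ∀ x, 0 ≤ μ x) (hμ1 : ∑ x, μ x = 1)
    (E : Finset (Fin d → F)) (hE : ∀ x, x ∈ E ↔ 0 < μ x)
    (c : ℝ) (hc : c ∈ Set.Ioo (0 : ℝ) 1) (hEc : (E.card : ℝ) ≤ c * (q : ℝ) ^ d) :
    Real.sqrt (1 - c) / Real.sqrt (E.card : ℝ) ≤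
      ⨆ ξ : {ξ : Fin d → F // ξ ≠ 0}, ‖ft χ (fun x => (μ x : ℂ)) ξ.1‖ := by
  obtain ⟨hc0, hc1⟩ := hc
  set f : (Fin d → F) → ℂ := fun x => (μ x : ℂ) with hf
  -- basic facts
  have hμE : ∀ x ∉ E, μ x = 0 := fun x hx => le_antisymm (not_lt.1 (fun h => hx ((hE x).2 h))) (hμ0 x)
  have hEsum : ∑ x ∈ E, μ x = 1 := by
    rw [← hμ1]; exact Finset.sum_subset (Finset.subset_univ E) (fun x _ hx => hμE x hx)
  have hEpos : 0 < E.card := by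
    rcases Finset.eq_empty_or_nonempty E with h | h
    · simp [h] at hEsum
    · exact Finset.card_pos.2 h
  have hq1 : 1 ≤ q := by rw [← hq]; exact Fintype.card_pos
  have hqpos : (0:ℝ) < (q:ℝ)^d := by positivity
  have hEcR : (0:ℝ) < E.card := by exact_mod_cast hEpos
  -- value at 0
  have hft0 : ft χ f 0 = 1 := by
    rw [ft]
    simp only [zero_dotProduct, neg_zero, AddChar.map_zero_eq_one, one_mul]
    rw [hf, ← Complex.ofReal_sum, hμ1, Complex.ofReal_one]
  -- Plancherel, real form
  have hmc : ∀ z : ℂ, z * (starRingEnd ℂ) z = ((‖z‖^2 : ℝ) : ℂ) := by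
    intro z
    rw [Complex.mul_conj, Complex.normSq_eq_norm_sq]
  have hP : ∑ ξ : Fin d → F, ‖ft χ f ξ‖^2 = (q:ℝ)^d * ∑ x, (μ x)^2 := by
    apply Complex.ofReal_injective
    rw [Complex.ofReal_sum]
    simp_rw [← hmc]
    rw [plancherel χ hχ f, hq]
    have h2 : ∀ x, f x * (starRingEnd ℂ) (f x) = ((μ x ^ 2 : ℝ) : ℂ) := fun x => by
      rw [hf]; simp [Complex.conj_ofReal]; push_cast; ring
    simp_rw [h2]
    push_cast
    ring
  -- Cauchy–Schwarz
  have hsq : ∑ x ∈ E, μ x ^ 2 = ∑ x : Fin d → F, μ x ^ 2 :=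
    Finset.sum_subset (Finset.subset_univ E) (fun x _ hx => by rw [hμE x hx]; ring)
  have hCS : 1 / (E.card : ℝ) ≤ ∑ x, (μ x)^2 := by
    rw [div_le_iff₀ hEcR, ← hsq]
    have := sq_sum_le_card_mul_sum_sq (s := E) (f := μ)
    rw [hEsum] at this
    linarith [this]
  -- sum over nonzero frequencies
  set T : Finset (Fin d → F) := Finset.univ.erase 0 with hT
  have hsplit : ∑ ξ ∈ T, ‖ft χ f ξ‖^2 = (q:ℝ)^d * ∑ x, (μ x)^2 - 1 := by
    have := Finset.add_sum_erase Finset.univ (fun ξ => ‖ft χ f ξ‖^2) (Finset.mem_univ 0)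
    simp only [hft0, norm_one, one_pow] at this
    rw [hT, ← hP, ← this]
    ring
  have hlow : ((q:ℝ)^d) * ((1 - c) / E.card) ≤ ∑ ξ ∈ T, ‖ft χ f ξ‖^2 := by
    rw [hsplit]
    have h1 : (q:ℝ)^d / E.card ≤ (q:ℝ)^d * ∑ x, (μ x)^2 := by
      rw [div_le_iff₀ hEcR] at hCS ⊢
      calc (q:ℝ)^d = (q:ℝ)^d * 1 := by ring
        _ ≤ (q:ℝ)^d * ((∑ x, (μ x)^2) * E.card) := by
            apply mul_le_mul_of_nonneg_left _ hqpos.le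
            linarith
        _ = (q:ℝ)^d * (∑ x, (μ x)^2) * E.card := by ring
    have h2 : c * (q:ℝ)^d / E.card ≥ 1 := by
      rw [ge_iff_le, le_div_iff₀ hEcR, one_mul]; exact hEc
    have : ((q:ℝ)^d) * ((1 - c) / E.card) = (q:ℝ)^d / E.card - c * (q:ℝ)^d / E.card := by
      field_simp
    rw [this]
    linarith
  -- pigeonhole
  have hTcard : (T.card : ℝ) ≤ (q:ℝ)^d := by
    have : T.card ≤ Fintype.card (Fin d → F) := by
      rw [← Finset.card_univ]; exact Finset.card_le_card (Finset.erase_subset _ _)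
    rw [Fintype.card_fun, hq, Fintype.card_fin] at this
    exact_mod_cast this
  have hpos : (0:ℝ) < ((q:ℝ)^d) * ((1 - c) / E.card) := by
    apply mul_pos hqpos
    apply div_pos (by linarith) hEcR
  have hTne : T.Nonempty := by
    rw [Finset.nonempty_iff_ne_empty]
    intro h
    rw [h, Finset.sum_empty] at hlow
    linarith
  obtain ⟨ξ₀, hξ₀T, hξ₀⟩ := Finset.exists_le_of_sum_le hTne (show
      ∑ _ξ ∈ T, (1 - c) / (E.card : ℝ) ≤ ∑ ξ ∈ T, ‖ft χ f ξ‖^2 by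
    rw [Finset.sum_const, nsmul_eq_mul]
    refine le_trans ?_ hlow
    apply mul_le_mul_of_nonneg_right hTcard
    apply div_nonneg (by linarith) hEcR.le)
  have hξ₀ne : ξ₀ ≠ 0 := Finset.ne_of_mem_erase hξ₀T
  -- conclude
  have hb : Real.sqrt (1 - c) / Real.sqrt (E.card : ℝ) ≤ ‖ft χ f ξ₀‖ := by
    rw [← Real.sqrt_div (by linarith)]
    calc Real.sqrt ((1 - c) / E.card) ≤ Real.sqrt (‖ft χ f ξ₀‖^2) := Real.sqrt_le_sqrt hξ₀
      _ = ‖ft χ f ξ₀‖ := Real.sqrt_sq (norm_nonneg _)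
  refine hb.trans ?_
  exact le_ciSup (f := fun ξ : {ξ : Fin d → F // ξ ≠ 0} => ‖ft χ f ξ.1‖)
    (Set.Finite.bddAbove (Set.finite_range _)) ⟨ξ₀, hξ₀ne⟩
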